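/- Let f((a_1, …, a_k)) = 1 − ∏_{j=1}^k (1 − p^j(a_j)) with 0 < p^j(a) < 1 for all a ∈ 𝔸 and all j. Let O_K = (o_1, …, o_K) be an optimal strategy and G_K = (g_1, …, g_K) a greedy strategy for f over horizon K. If ∏_{j=i+1}^K (1 − p^j(o_j)) ≤ i/K for every 1 ≤ i ≤ K − 1, then f is K-GO-concave, i.e., f(G_i ⊕ Ō_{K−i}) ≥ (i/K)·f(G_i) + (1 − i/K)·f(O_K) for all 1 ≤ i ≤ K − 1. -/

import Mathlib

private lemma enum_prod17 {α : Type*} (p : α → ℕ → ℝ) (h : ℕ → α) :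
    ∀ (n s : ℕ),
    ((((List.range n).map h).zipIdx s).map (fun ja => 1 - p ja.1 (ja.2 + 1))).prod
      = ∏ j ∈ Finset.range n, (1 - p (h j) (s + j + 1)) := by
  intro n
  induction n with
  | zero => simp
  | succ n ih =>
    intro s
    rw [List.range_succ, List.map_append, List.zipIdx_append, List.map_append,
      List.prod_append, ih, Finset.prod_range_succ]
    simp


/-- Task-assignment objective `f((a_1,…,a_k)) = 1 − ∏_{j=1}^k (1 − p^j(a_j))`
with `0 < p^j(a) < 1`: if `∏_{j=i+1}^K (1 − p^j(o_j)) ≤ i/K` for every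
`1 ≤ i ≤ K − 1`, then `f` is K-GO-concave.  Strategies are indexed 0-based:
`G_i = (g 0, …, g (i−1))`, `O_K = (o 0, …, o (K−1))`, so the action at
(1-based) stage `j` of the optimal strategy is `o (j−1)`. -/
theorem stmt17 {α : Type*} [Nonempty α] (K : ℕ) (hK : 1 ≤ K)
    (p : α → ℕ → ℝ)
    (hp : ∀ (a : α) (j : ℕ), 1 ≤ j → 0 < p a j ∧ p a j < 1)
    (f : List α → ℝ)
    (hf : ∀ M : List α, f M = 1 - (M.zipIdx.map (fun ja => 1 - p ja.1 (ja.2 + 1))).prod)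
    (g o : ℕ → α)
    -- O_K is an optimal strategy of length K
    (hopt : ∀ M : List α, M.length ≤ K → f ((List.range K).map o) ≥ f M)
    -- G_K is a greedy strategy
    (hgreedy : ∀ i < K, ∀ a : α,
      f ((List.range i).map g ++ [g i]) ≥ f ((List.range i).map g ++ [a]))
    -- product-of-failure-probabilities condition
    (hprod : ∀ i : ℕ, 1 ≤ i → i ≤ K - 1 →
      ∏ j ∈ Finset.Icc (i + 1) K, (1 - p (o (j - 1)) j) ≤ (i : ℝ) / K) :
    -- f is K-GO-concave
    ∀ i : ℕ, 1 ≤ i → i ≤ K - 1 →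
      f ((List.range i).map g ++ (List.range (K - i)).map (fun j => o (i + j))) ≥
        ((i : ℝ) / K) * f ((List.range i).map g) +
          (1 - (i : ℝ) / K) * f ((List.range K).map o) := by
  intro i hi1 hiK
  have hiK' : i ≤ K := le_trans hiK (Nat.sub_le K 1)
  set Pg : ℝ := ∏ j ∈ Finset.range i, (1 - p (g j) (j + 1)) with hPgdef
  set Q1 : ℝ := ∏ j ∈ Finset.range i, (1 - p (o j) (j + 1)) with hQ1def
  set Q2 : ℝ := ∏ j ∈ Finset.range (K - i), (1 - p (o (i + j)) (i + j + 1)) with hQ2def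
  -- f(G_i) = 1 - Pg
  have hG : f ((List.range i).map g) = 1 - Pg := by
    rw [hf, enum_prod17]
    simp [hPgdef]
  -- f(O_K) = 1 - Q1 * Q2
  have hO : f ((List.range K).map o) = 1 - Q1 * Q2 := by
    rw [hf, enum_prod17]
    have : ∏ j ∈ Finset.range K, (1 - p (o j) (0 + j + 1))
        = Q1 * Q2 := by
      rw [hQ1def, hQ2def, Finset.range_eq_Ico,
        ← Finset.prod_Ico_consecutive _ (Nat.zero_le i) hiK',
        Finset.prod_Ico_eq_prod_range, Finset.prod_Ico_eq_prod_range]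
      simp [add_comm, add_assoc, add_left_comm]
    rw [this]
  -- f(mix) = 1 - Pg * Q2
  have hM : f ((List.range i).map g ++ (List.range (K - i)).map (fun j => o (i + j)))
      = 1 - Pg * Q2 := by
    rw [hf, List.zipIdx_append, List.map_append, List.prod_append,
      enum_prod17, List.length_map, List.length_range, enum_prod17]
    simp [hPgdef, hQ2def]
  -- Q2 ≤ i/K
  have hQ2le : Q2 ≤ (i : ℝ) / K := by
    have h := hprod i hi1 hiK
    have : ∏ j ∈ Finset.Icc (i + 1) K, (1 - p (o (j - 1)) j) = Q2 := by
      rw [hQ2def, ← Finset.Ico_add_one_right_eq_Icc, Finset.prod_Ico_eq_prod_range]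
      apply Finset.prod_congr
      · congr 1; omega
      · intro j _
        have h1 : i + 1 + j - 1 = i + j := by omega
        have h2 : i + 1 + j = i + j + 1 := by omega
        rw [h1, h2]
    rwa [this] at h
  -- nonnegativity
  have hfac : ∀ (a : α) (j : ℕ), (0:ℝ) ≤ 1 - p a (j + 1) := by
    intro a j
    have := (hp a (j + 1) (by omega)).2
    linarith
  have hPg0 : 0 ≤ Pg := Finset.prod_nonneg fun j _ => hfac _ _
  have hQ10 : 0 ≤ Q1 := Finset.prod_nonneg fun j _ => hfac _ _
  have hQ20 : 0 ≤ Q2 := Finset.prod_nonneg fun j _ => hfac _ _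
  have htle : (i : ℝ) / K ≤ 1 := by
    rw [div_le_one (by positivity)]
    exact_mod_cast hiK'
  rw [hG, hO, hM]
  nlinarith [mul_le_mul_of_nonneg_left hQ2le hPg0, mul_nonneg hQ10 hQ20,
    mul_nonneg (mul_nonneg hQ10 hQ20) (by linarith : (0:ℝ) ≤ 1 - (i:ℝ)/K)]
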